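/- Let e ≥ 4 and r ≥ 3 be integers and let H be an r-uniform r-partite linear hypergraph consisting of exactly e edges whose vertex set is the union of its edges. Assume that H is G_r(3r−3, 3)-free and G_r((e−1)(r−2)+3, e−1)-free, and that |V(H)| ≤ e(r−2)+3. Then every vertex of H has degree at most ⌊e/3⌋, where the degree of a vertex is the number of edges containing it. -/
import Mathlib


open Finset

/-- A hypergraph `H` is `G_r(v,e)`-free if any `e` distinct edges span at least `v+1` vertices. -/
def GFree {V : Type*} [DecidableEq V] (H : Finset (Finset V)) (v e : ℕ) : Prop :=
  ∀ S ⊆ H, S.card = e → v + 1 ≤ (S.biUnion id).card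

/-- `extremalF r n v e` is the maximum number of edges of a `G_r(v,e)`-free `r`-uniform
hypergraph on `n` vertices. -/
noncomputable def extremalF (r n v e : ℕ) : ℕ :=
  sSup {m : ℕ | ∃ H : Finset (Finset (Fin n)),
    (∀ A ∈ H, A.card = r) ∧ GFree H v e ∧ H.card = m}

theorem max_degree_le {V : Type*} [DecidableEq V] (r e : ℕ) (hr : 3 ≤ r) (he : 4 ≤ e)
    (H : Finset (Finset V)) (part : V → Fin r)
    (hpart : ∀ A ∈ H, ∀ i : Fin r, (A.filter fun x => part x = i).card = 1)
    (hlin : ∀ A ∈ H, ∀ B ∈ H, A ≠ B → (A ∩ B).card ≤ 1)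
    (hcardH : H.card = e)
    (hfree3 : GFree H (3 * r - 3) 3)
    (hfree : GFree H ((e - 1) * (r - 2) + 3) (e - 1))
    (hV : (H.biUnion id).card ≤ e * (r - 2) + 3) :
    ∀ x ∈ H.biUnion id, (H.filter fun A => x ∈ A).card ≤ e / 3 := by
  classical
  -- Every edge has exactly r vertices
  have hcard : ∀ A ∈ H, A.card = r := by
    intro A hA
    rw [Finset.card_eq_sum_card_fiberwise (f := part) (t := (Finset.univ : Finset (Fin r)))
      (fun y _ => Finset.mem_univ _)]
    rw [Finset.sum_congr rfl (fun i _ => hpart A hA i)]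
    simp
  intro x hx
  set S := H.filter (fun A => x ∈ A) with hSdef
  by_cases hd : S.card ≤ 1
  · have : 1 ≤ e / 3 := by omega
    omega
  push_neg at hd
  set T := H.filter (fun A => x ∉ A) with hTdef
  have hST : S.card + T.card = e := by
    rw [hSdef, hTdef, Finset.card_filter_add_card_filter_not, hcardH]
  -- membership facts
  have hSmem : ∀ A ∈ S, A ∈ H ∧ x ∈ A := fun A hA => Finset.mem_filter.mp hA
  have hTmem : ∀ B ∈ T, B ∈ H ∧ x ∉ B := fun B hB => Finset.mem_filter.mp hB
  set N : Finset V → Finset (Finset V) := fun A => T.filter (fun B => (A ∩ B).Nonempty)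
    with hNdef
  -- each neighborhood set has at least 2 elements
  have hNA : ∀ A ∈ S, 2 ≤ (N A).card := by
    intro A hAS
    obtain ⟨hA, hxA⟩ := hSmem A hAS
    set W' := (H.erase A).biUnion id with hW'def
    have hW'card : (e - 1) * (r - 2) + 3 + 1 ≤ W'.card := by
      apply hfree
      · exact Finset.erase_subset _ _
      · rw [Finset.card_erase_of_mem hA, hcardH]
    have hWeq : H.biUnion id = A ∪ W' := by
      conv_lhs => rw [← Finset.insert_erase hA]
      rw [Finset.biUnion_insert]; rfl
    have h3 : 3 ≤ (A ∩ W').card := by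
      have h1 := Finset.card_inter_add_card_union A W'
      have h2 : (A ∪ W').card ≤ e * (r - 2) + 3 := by rw [← hWeq]; exact hV
      have hAr : A.card = r := hcard A hA
      have hmul : e * (r - 2) = (e - 1) * (r - 2) + (r - 2) := by
        have h' : e - 1 + 1 = e := by omega
        calc e * (r - 2) = (e - 1 + 1) * (r - 2) := by rw [h']
          _ = (e - 1) * (r - 2) + (r - 2) := by ring
      omega
    -- two distinct vertices of A, other than x, covered by other edges
    have h2' : 2 ≤ ((A ∩ W').erase x).card := by
      by_cases hxw : x ∈ A ∩ W'
      · rw [Finset.card_erase_of_mem hxw]; omega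
      · rw [Finset.erase_eq_of_notMem hxw]; omega
    obtain ⟨y₁, hy₁, y₂, hy₂, hyne⟩ := Finset.one_lt_card.mp (by omega : 1 < ((A ∩ W').erase x).card)
    -- extract covering edges
    have key : ∀ y ∈ (A ∩ W').erase x, ∃ C ∈ N A, y ∈ C := by
      intro y hy
      obtain ⟨hyx, hyA, hyW'⟩ : y ≠ x ∧ y ∈ A ∧ y ∈ W' := by
        have h1 := Finset.mem_erase.mp hy
        have h2 := Finset.mem_inter.mp h1.2
        exact ⟨h1.1, h2.1, h2.2⟩
      obtain ⟨C, hC, hyC⟩ := Finset.mem_biUnion.mp hyW'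
      have hCH : C ∈ H := Finset.mem_of_mem_erase hC
      have hCA : C ≠ A := Finset.ne_of_mem_erase hC
      have hxC : x ∉ C := by
        intro hxC
        have : 1 < (A ∩ C).card := Finset.one_lt_card.mpr
          ⟨x, Finset.mem_inter.mpr ⟨hxA, hxC⟩, y, Finset.mem_inter.mpr ⟨hyA, hyC⟩, Ne.symm hyx⟩
        exact absurd (hlin A hA C hCH (Ne.symm hCA)) (by omega)
      refine ⟨C, Finset.mem_filter.mpr ⟨Finset.mem_filter.mpr ⟨hCH, hxC⟩, ⟨y, Finset.mem_inter.mpr ⟨hyA, hyC⟩⟩⟩, hyC⟩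
    obtain ⟨C₁, hC₁, hyC₁⟩ := key y₁ hy₁
    obtain ⟨C₂, hC₂, hyC₂⟩ := key y₂ hy₂
    have hCne : C₁ ≠ C₂ := by
      intro hEq
      subst hEq
      have hy₁A : y₁ ∈ A := (Finset.mem_inter.mp (Finset.mem_erase.mp hy₁).2).1
      have hy₂A : y₂ ∈ A := (Finset.mem_inter.mp (Finset.mem_erase.mp hy₂).2).1
      have hC₁H : C₁ ∈ H := (hTmem C₁ (Finset.mem_filter.mp hC₁).1).1
      have hC₁A : C₁ ≠ A := by
        intro h; exact (hTmem C₁ (Finset.mem_filter.mp hC₁).1).2 (h ▸ hxA)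
      have : 1 < (A ∩ C₁).card := Finset.one_lt_card.mpr
        ⟨y₁, Finset.mem_inter.mpr ⟨hy₁A, hyC₁⟩, y₂, Finset.mem_inter.mpr ⟨hy₂A, hyC₂⟩, hyne⟩
      exact absurd (hlin A hA C₁ hC₁H (Ne.symm hC₁A)) (by omega)
    exact Finset.one_lt_card.mpr ⟨C₁, hC₁, C₂, hC₂, hCne⟩
  -- the neighborhood sets are pairwise disjoint
  have hdisj : ∀ A₁ ∈ S, ∀ A₂ ∈ S, A₁ ≠ A₂ → Disjoint (N A₁) (N A₂) := by
    intro A₁ hA₁S A₂ hA₂S hne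
    rw [Finset.disjoint_left]
    intro B hB₁ hB₂
    obtain ⟨hA₁, hxA₁⟩ := hSmem A₁ hA₁S
    obtain ⟨hA₂, hxA₂⟩ := hSmem A₂ hA₂S
    obtain ⟨hBT, ⟨y₁, hy₁⟩⟩ := Finset.mem_filter.mp hB₁
    obtain ⟨-, ⟨y₂, hy₂⟩⟩ := Finset.mem_filter.mp hB₂
    obtain ⟨hBH, hxB⟩ := hTmem B hBT
    have hy₁A : y₁ ∈ A₁ := (Finset.mem_inter.mp hy₁).1
    have hy₁B : y₁ ∈ B := (Finset.mem_inter.mp hy₁).2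
    have hy₂A : y₂ ∈ A₂ := (Finset.mem_inter.mp hy₂).1
    have hy₂B : y₂ ∈ B := (Finset.mem_inter.mp hy₂).2
    have hy₁x : y₁ ≠ x := fun h => hxB (h ▸ hy₁B)
    have hy₂x : y₂ ≠ x := fun h => hxB (h ▸ hy₂B)
    have hyne : y₁ ≠ y₂ := by
      intro h
      subst h
      have : 1 < (A₁ ∩ A₂).card := Finset.one_lt_card.mpr
        ⟨x, Finset.mem_inter.mpr ⟨hxA₁, hxA₂⟩, y₁, Finset.mem_inter.mpr ⟨hy₁A, hy₂A⟩, Ne.symm hy₁x⟩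
      exact absurd (hlin A₁ hA₁ A₂ hA₂ hne) (by omega)
    have hBA₁ : B ≠ A₁ := fun h => hxB (h ▸ hxA₁)
    have hBA₂ : B ≠ A₂ := fun h => hxB (h ▸ hxA₂)
    -- form the triple and contradict 3-freeness
    set U : Finset (Finset V) := insert A₁ (insert A₂ {B}) with hUdef
    have hUsub : U ⊆ H := by
      intro C hC
      simp only [hUdef, Finset.mem_insert, Finset.mem_singleton] at hC
      rcases hC with rfl | rfl | rfl <;> assumption
    have hUcard : U.card = 3 := by
      rw [hUdef, Finset.card_insert_of_notMem, Finset.card_insert_of_notMem,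
        Finset.card_singleton]
      · simp [Ne.symm hBA₂]
      · simp [hne, Ne.symm hBA₁]
    have hfree3' := hfree3 U hUsub hUcard
    have hUbi : U.biUnion id = A₁ ∪ (A₂ ∪ B) := by
      rw [hUdef]; simp [Finset.biUnion_insert]
    -- compute cardinality bound
    have hA₁r : A₁.card = r := hcard A₁ hA₁
    have hA₂r : A₂.card = r := hcard A₂ hA₂
    have hBr : B.card = r := hcard B hBH
    have h12 := Finset.card_union_add_card_inter A₁ A₂
    have hint12 : (A₁ ∩ A₂).card = 1 := by
      have h1 : 1 ≤ (A₁ ∩ A₂).card :=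
        Finset.card_pos.mpr ⟨x, Finset.mem_inter.mpr ⟨hxA₁, hxA₂⟩⟩
      have h2 := hlin A₁ hA₁ A₂ hA₂ hne
      omega
    have hUB := Finset.card_union_add_card_inter (A₁ ∪ A₂) B
    have hintUB : 2 ≤ ((A₁ ∪ A₂) ∩ B).card := Finset.one_lt_card.mpr
      ⟨y₁, Finset.mem_inter.mpr ⟨Finset.mem_union_left _ hy₁A, hy₁B⟩,
       y₂, Finset.mem_inter.mpr ⟨Finset.mem_union_right _ hy₂A, hy₂B⟩, hyne⟩
    have hfin : (U.biUnion id).card = ((A₁ ∪ A₂) ∪ B).card := by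
      rw [hUbi, Finset.union_assoc]
    omega
  -- conclude by counting
  have hsub : S.biUnion N ⊆ T := by
    intro B hB
    obtain ⟨A, hA, hBN⟩ := Finset.mem_biUnion.mp hB
    exact (Finset.mem_filter.mp hBN).1
  have hb : (S.biUnion N).card = ∑ A ∈ S, (N A).card := Finset.card_biUnion hdisj
  have hsum : ∑ A ∈ S, 2 ≤ ∑ A ∈ S, (N A).card := Finset.sum_le_sum (fun A hA => hNA A hA)
  have hle := Finset.card_le_card hsub
  simp only [Finset.sum_const, smul_eq_mul] at hsum
  omega
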